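/- arXiv:2511.15925 — 2 statements merged into one kernel-verified Lean document; each statement's English description precedes it below -/
import Mathlib

section
/- Let κ, ρ ∈ (0,1) and q ≥ 0, and set ξ' = (κ + ρ + 2q)/(1−κ). Let S, d ∈ ℝ with |d| ≤ q, and set S⁺ = (1−κ)S − (κ+ρ+q)·sgn(S) + d, where sgn denotes the real sign function (sgn 0 = 0). If S > ξ' then 0 < S⁺ < S, and if S < −ξ' then S < S⁺ < 0. -/
/-- sign preservation and strict decrease outside the band
`ξ' = (κ + ρ + 2q)/(1-κ)` (Eqs. 61–62): with `S⁺ = (1-κ)S - (κ+ρ+q)·sgn(S) + d`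
and `|d| ≤ q`, if `S > ξ'` then `0 < S⁺ < S`, and if `S < -ξ'` then `S < S⁺ < 0`. -/
theorem stmt_11 (κ ρ q : ℝ) (hκ : κ ∈ Set.Ioo (0 : ℝ) 1) (hρ : ρ ∈ Set.Ioo (0 : ℝ) 1)
    (hq : 0 ≤ q)
    (ξ' : ℝ) (hξ' : ξ' = (κ + ρ + 2 * q) / (1 - κ))
    (S d : ℝ) (hd : |d| ≤ q)
    (Splus : ℝ) (hSplus : Splus = (1 - κ) * S - (κ + ρ + q) * Real.sign S + d) :
    (S > ξ' → 0 < Splus ∧ Splus < S) ∧ (S < -ξ' → S < Splus ∧ Splus < 0) := by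
  obtain ⟨hκ0, hκ1⟩ := hκ
  obtain ⟨hρ0, hρ1⟩ := hρ
  have h1κ : (0:ℝ) < 1 - κ := by linarith
  have hξpos : 0 < ξ' := by
    rw [hξ']; positivity
  have hd1 := abs_le.mp hd
  constructor
  · intro hS
    have hSpos : 0 < S := lt_trans hξpos hS
    have hsgn : Real.sign S = 1 := Real.sign_of_pos hSpos
    have hmul : (1 - κ) * S > κ + ρ + 2 * q := by
      have := (div_lt_iff₀ h1κ).mp (hξ' ▸ hS)
      linarith [this]
    constructor
    · rw [hSplus, hsgn]; nlinarith
    · rw [hSplus, hsgn]; nlinarith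
  · intro hS
    have hSneg : S < 0 := by linarith
    have hsgn : Real.sign S = -1 := Real.sign_of_neg hSneg
    have hmul : (1 - κ) * S < -(κ + ρ + 2 * q) := by
      have h2 : ξ' < -S := by linarith
      have := (div_lt_iff₀ h1κ).mp (hξ' ▸ h2)
      nlinarith
    constructor
    · rw [hSplus, hsgn]; nlinarith
    · rw [hSplus, hsgn]; nlinarith
end

section
/- Let κ, ρ ∈ (0,1) and q ≥ 0, and set ξ' = (κ + ρ + 2q)/(1−κ). Let S : ℕ → ℝ and d : ℕ → ℝ be sequences with |d(k)| ≤ q for all k, satisfying the recursion S(k+1) = (1−κ)S(k) − (κ+ρ+q)·sgn(S(k)) + d(k), where sgn denotes the real sign function (sgn 0 = 0). Then: (i) if |S(k)| ≤ ξ' then |S(k+1)| ≤ ξ' (the band [−ξ', ξ'] is positively invariant); and (ii) for any initial value S(0) there exists N ∈ ℕ such that |S(k)| ≤ ξ' for all k ≥ N. -/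
/-- ultimate boundedness of the sliding variable (Theorem 5): for the
recursion `S(k+1) = (1-κ)S(k) - (κ+ρ+q)·sgn(S(k)) + d(k)` with `|d(k)| ≤ q` and
`ξ' = (κ + ρ + 2q)/(1-κ)`: (i) the band `[-ξ', ξ']` is positively invariant, and
(ii) the trajectory eventually enters and stays in the band. -/
theorem stmt_12 (κ ρ q : ℝ) (hκ : κ ∈ Set.Ioo (0 : ℝ) 1) (hρ : ρ ∈ Set.Ioo (0 : ℝ) 1)
    (hq : 0 ≤ q)
    (ξ' : ℝ) (hξ' : ξ' = (κ + ρ + 2 * q) / (1 - κ))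
    (S d : ℕ → ℝ) (hd : ∀ k, |d k| ≤ q)
    (hrec : ∀ k, S (k + 1) = (1 - κ) * S k - (κ + ρ + q) * Real.sign (S k) + d k) :
    (∀ k, |S k| ≤ ξ' → |S (k + 1)| ≤ ξ') ∧ (∃ N : ℕ, ∀ k ≥ N, |S k| ≤ ξ') := by
  obtain ⟨hκ0, hκ1⟩ := hκ
  obtain ⟨hρ0, hρ1⟩ := hρ
  have h1κ : 0 < 1 - κ := by linarith
  have hξeq : ξ' * (1 - κ) = κ + ρ + 2 * q := by
    rw [hξ']; field_simp
  have hξge : κ + ρ + 2 * q ≤ ξ' := by nlinarith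
  have hξpos : 0 < ξ' := by nlinarith
  have key : ∀ k, |S (k + 1)| ≤ max (|S k| - (κ + ρ)) ξ' := by
    intro k
    obtain ⟨hd1, hd2⟩ := abs_le.mp (hd k)
    rcases lt_trichotomy (S k) 0 with hS | hS | hS
    · have hsgn : Real.sign (S k) = -1 := Real.sign_of_neg hS
      rw [hrec k, hsgn]
      rcases le_or_gt (-ξ') (S k) with h | h
      · refine le_max_of_le_right (abs_le.mpr ⟨?_, ?_⟩) <;> nlinarith
      · have habs : |S k| = -S k := abs_of_neg hS
        refine le_max_of_le_left ?_
        rw [habs, abs_le]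
        constructor <;> nlinarith
    · rw [hrec k, hS, Real.sign_zero]
      refine le_max_of_le_right ?_
      have : (1 - κ) * 0 - (κ + ρ + q) * 0 + d k = d k := by ring
      rw [this, abs_le]
      constructor <;> nlinarith
    · have hsgn : Real.sign (S k) = 1 := Real.sign_of_pos hS
      rw [hrec k, hsgn]
      rcases le_or_gt (S k) ξ' with h | h
      · refine le_max_of_le_right (abs_le.mpr ⟨?_, ?_⟩) <;> nlinarith
      · have habs : |S k| = S k := abs_of_pos hS
        refine le_max_of_le_left ?_
        rw [habs, abs_le]
        constructor <;> nlinarith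
  have inv : ∀ k, |S k| ≤ ξ' → |S (k + 1)| ≤ ξ' := by
    intro k hk
    refine (key k).trans (max_le (by linarith) le_rfl)
  refine ⟨inv, ?_⟩
  have bnd : ∀ k : ℕ, |S k| ≤ max (|S 0| - k * (κ + ρ)) ξ' := by
    intro k
    induction k with
    | zero => simpa using le_max_left (|S 0|) ξ'
    | succ n ih =>
      refine (key n).trans (max_le ?_ (le_max_right _ _))
      rcases max_cases (|S 0| - (n : ℝ) * (κ + ρ)) ξ' with ⟨h, _⟩ | ⟨h, _⟩ <;>
        rw [h] at ih
      · refine le_max_of_le_left ?_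
        push_cast
        linarith
      · refine le_max_of_le_right ?_
        linarith
  obtain ⟨N, hN⟩ := exists_nat_ge ((|S 0| - ξ') / (κ + ρ))
  have hδ : 0 < κ + ρ := by linarith
  refine ⟨N, fun k hk => ?_⟩
  have hkN : (N : ℝ) ≤ k := by exact_mod_cast hk
  have h1 : |S 0| - ξ' ≤ N * (κ + ρ) := by
    rw [div_le_iff₀ hδ] at hN; linarith
  have h2 : |S 0| - (k : ℝ) * (κ + ρ) ≤ ξ' := by nlinarith
  exact (bnd k).trans (max_le h2 le_rfl)
end
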